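/- arXiv:quant-ph/0304112 — 2 statements merged into one kernel-verified Lean document; each statement's English description precedes it below -/
import Mathlib

section
/- Let d_A, d_M ≥ 1 and N ≥ 1 be natural numbers and for j = 1, …, N let U_j be a unitary complex matrix indexed by Fin d_A × Fin d_M. Suppose ρ_0, ρ_1, …, ρ_N are positive semidefinite matrices indexed by Fin d_A × Fin d_M satisfying: (i) for all α, α' ∈ Fin d_A, Σ_{μ ∈ Fin d_M} ρ_0((α,μ),(α',μ)) equals 1 if α = α' = 0 and 0 otherwise; (ii) for each 1 ≤ j ≤ N and all α, α', Σ_μ ρ_j((α,μ),(α',μ)) = Σ_μ (U_j ρ_{j−1} U_j†)((α,μ),(α',μ)). Suppose Z_0, …, Z_N are Hermitian d_A × d_A matrices with U_{j+1}†·(Z_{j+1} ⊗ I_M)·U_{j+1} ⪯ Z_j ⊗ I_M for 0 ≤ j ≤ N−1. Then Re(tr((Z_N ⊗ I_M)·ρ_N)) ≤ Re((Z_0)_{0,0}). (Weak duality for Kitaev's cheating SDP: any dual-feasible sequence upper-bounds the value of any cheating strategy.) -/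
open Matrix Kronecker
open scoped ComplexOrder

lemma psd_diag_nonneg {n : Type*} [Fintype n] [DecidableEq n] {M : Matrix n n ℂ}
    (hM : M.PosSemidef) (i : n) : 0 ≤ M i i := by
  exact hM.diag_nonneg

lemma psd_trace_re_nonneg {n : Type*} [Fintype n] [DecidableEq n] {A B : Matrix n n ℂ}
    (hA : A.PosSemidef) (hB : B.PosSemidef) : 0 ≤ ((A * B).trace).re := by
  obtain ⟨C, rfl⟩ : ∃ C : Matrix n n ℂ, A = Cᴴ * C := by
    open MatrixOrder in
    obtain ⟨C, hC⟩ := CStarAlgebra.nonneg_iff_eq_star_mul_self.mp hA.nonneg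
    exact ⟨C, hC⟩
  have h1 : (Cᴴ * C * B).trace = (C * B * Cᴴ).trace := by
    rw [Matrix.mul_assoc, Matrix.trace_mul_comm, Matrix.mul_assoc]
  have hPSD := hB.mul_mul_conjTranspose_same C
  have h2 : 0 ≤ (C * B * Cᴴ).trace := by
    rw [Matrix.trace]
    exact Finset.sum_nonneg fun i _ => psd_diag_nonneg hPSD i
  rw [h1]
  exact (Complex.le_def.mp h2).1

lemma trace_kron {dA dM : ℕ} (Z : Matrix (Fin dA) (Fin dA) ℂ)
    (σ : Matrix (Fin dA × Fin dM) (Fin dA × Fin dM) ℂ) :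
    ((Z ⊗ₖ (1 : Matrix (Fin dM) (Fin dM) ℂ)) * σ).trace =
      ∑ α : Fin dA, ∑ α' : Fin dA, Z α α' * ∑ μ : Fin dM, σ (α', μ) (α, μ) := by
  simp only [Matrix.trace, Matrix.diag, Matrix.mul_apply, Matrix.kroneckerMap_apply,
    Matrix.one_apply, Fintype.sum_prod_type, mul_ite, mul_one, mul_zero, ite_mul, zero_mul,
    Finset.sum_ite_eq, Finset.mem_univ, if_true, Finset.mul_sum]
  exact Finset.sum_congr rfl fun x _ =>
    Finset.sum_comm (f := fun (y : Fin dM) (x2 : Fin dA) => Z x x2 * σ (x2, y) (x, y))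

/-- Weak duality for Kitaev's cheating SDP: any dual-feasible sequence `Z_j`
upper-bounds the value of any feasible cheating strategy `ρ_j` against honest
Alice (whose private space is `ℂ^{d_A}`, the message space being `ℂ^{d_M}`). -/
theorem stmt_9 (dA dM N : ℕ) (hdA : 0 < dA) (hdM : 0 < dM) (hN : 1 ≤ N)
    (U : ℕ → Matrix (Fin dA × Fin dM) (Fin dA × Fin dM) ℂ)
    (hU : ∀ j, 1 ≤ j → j ≤ N → U j ∈ Matrix.unitaryGroup (Fin dA × Fin dM) ℂ)
    (ρ : ℕ → Matrix (Fin dA × Fin dM) (Fin dA × Fin dM) ℂ)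
    (hρ : ∀ j ≤ N, (ρ j).PosSemidef)
    (hρ0 : ∀ α α' : Fin dA, ∑ μ : Fin dM, ρ 0 (α, μ) (α', μ) =
      if α = ⟨0, hdA⟩ ∧ α' = ⟨0, hdA⟩ then 1 else 0)
    (hρstep : ∀ j, 1 ≤ j → j ≤ N → ∀ α α' : Fin dA,
      ∑ μ : Fin dM, ρ j (α, μ) (α', μ) =
      ∑ μ : Fin dM, (U j * ρ (j - 1) * (U j)ᴴ) (α, μ) (α', μ))
    (Z : ℕ → Matrix (Fin dA) (Fin dA) ℂ)
    (hZ : ∀ j ≤ N, (Z j).IsHermitian)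
    (hdual : ∀ j < N, (Z j ⊗ₖ (1 : Matrix (Fin dM) (Fin dM) ℂ) -
      (U (j + 1))ᴴ * (Z (j + 1) ⊗ₖ (1 : Matrix (Fin dM) (Fin dM) ℂ)) * U (j + 1)).PosSemidef) :
    (((Z N ⊗ₖ (1 : Matrix (Fin dM) (Fin dM) ℂ)) * ρ N).trace).re ≤
      (Z 0 ⟨0, hdA⟩ ⟨0, hdA⟩).re := by
  -- monotonicity
  have key : ∀ j, j ≤ N →
      (((Z j ⊗ₖ (1 : Matrix (Fin dM) (Fin dM) ℂ)) * ρ j).trace).re ≤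
      (((Z 0 ⊗ₖ (1 : Matrix (Fin dM) (Fin dM) ℂ)) * ρ 0).trace).re := by
    intro j
    induction j with
    | zero => intro _; exact le_refl _
    | succ j ih =>
      intro hjN
      have hj : j ≤ N := Nat.le_of_succ_le hjN
      set I1 : Matrix (Fin dM) (Fin dM) ℂ := 1
      -- rewrite trace at j+1 using the partial-trace constraint
      have heq : ((Z (j+1) ⊗ₖ I1) * ρ (j+1)).trace =
          ((Z (j+1) ⊗ₖ I1) * (U (j+1) * ρ j * (U (j+1))ᴴ)).trace := by
        rw [trace_kron, trace_kron]
        refine Finset.sum_congr rfl fun α _ => Finset.sum_congr rfl fun α' _ => ?_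
        have := hρstep (j+1) (Nat.le_add_left 1 j) hjN α' α
        simp only [Nat.add_sub_cancel] at this
        rw [this]
      have hcyc : ((Z (j+1) ⊗ₖ I1) * (U (j+1) * ρ j * (U (j+1))ᴴ)).trace =
          (((U (j+1))ᴴ * (Z (j+1) ⊗ₖ I1) * U (j+1)) * ρ j).trace := by
        rw [show (Z (j+1) ⊗ₖ I1) * (U (j+1) * ρ j * (U (j+1))ᴴ) =
            ((Z (j+1) ⊗ₖ I1) * U (j+1) * ρ j) * (U (j+1))ᴴ by
          simp only [Matrix.mul_assoc]]
        rw [Matrix.trace_mul_comm]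
        simp only [Matrix.mul_assoc]
      have hdiff : 0 ≤ ((((Z j ⊗ₖ I1) -
          ((U (j+1))ᴴ * (Z (j+1) ⊗ₖ I1) * U (j+1))) * ρ j).trace).re :=
        psd_trace_re_nonneg (hdual j (Nat.lt_of_succ_le hjN)) (hρ j hj)
      have hsub : (((Z j ⊗ₖ I1) - ((U (j+1))ᴴ * (Z (j+1) ⊗ₖ I1) * U (j+1))) * ρ j).trace =
          ((Z j ⊗ₖ I1) * ρ j).trace -
          (((U (j+1))ᴴ * (Z (j+1) ⊗ₖ I1) * U (j+1)) * ρ j).trace := by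
        rw [Matrix.sub_mul, Matrix.trace_sub]
      rw [hsub] at hdiff
      have := ih hj
      calc (((Z (j+1) ⊗ₖ I1) * ρ (j+1)).trace).re
          = ((((U (j+1))ᴴ * (Z (j+1) ⊗ₖ I1) * U (j+1)) * ρ j).trace).re := by rw [heq, hcyc]
        _ ≤ (((Z j ⊗ₖ I1) * ρ j).trace).re := by
            have := Complex.sub_re (((Z j ⊗ₖ I1) * ρ j).trace)
              ((((U (j+1))ᴴ * (Z (j+1) ⊗ₖ I1) * U (j+1)) * ρ j).trace)
            linarith [hdiff, this.symm ▸ hdiff]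
        _ ≤ _ := ih hj
  -- base value
  have hbase : ((Z 0 ⊗ₖ (1 : Matrix (Fin dM) (Fin dM) ℂ)) * ρ 0).trace =
      Z 0 ⟨0, hdA⟩ ⟨0, hdA⟩ := by
    rw [trace_kron]
    simp only [hρ0, mul_ite, mul_one, mul_zero]
    rw [Finset.sum_comm]
    simp [Finset.sum_ite_eq, ite_and]
  have hfin := key N le_rfl
  rw [hbase] at hfin
  exact hfin
end

section
/- Let k ≥ 1, let d : Fin k → ℕ with d i ≥ 1 for all i, and let m ≥ 1. Write H for the index type ((i : Fin k) → Fin (d i)) × Fin m. Fix t : Fin k and a unitary complex matrix V indexed by Fin (d t) × Fin m, and define its extension Ṽ, a matrix indexed by H, by Ṽ((a,μ),(a',μ')) = V((a t, μ),(a' t, μ')) if a i = a' i for all i ≠ t, and 0 otherwise. For each i let Z i be a positive semidefinite matrix of size (d i) × (d i), and let Z' be a positive semidefinite matrix of size (d t) × (d t) such that V†·(Z' ⊗ I_m)·V ⪯ (Z t) ⊗ I_m. For a family (W i) of matrices with W i of size (d i) × (d i), let T(W) be the matrix indexed by H given by T(W)((a,μ),(a',μ')) = Π_{i} (W i)(a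 i, a' i) if μ = μ', and 0 otherwise. Then for every vector ψ indexed by H, Re⟨ψ, T(Z)·ψ⟩ ≥ Re⟨Ṽψ, T(Z'')·(Ṽψ)⟩, where Z'' is the family with Z'' t = Z' and Z'' i = Z i for i ≠ t. (Monotonicity step F_j ≥ F_{j+1} in the multiparty extension of Kitaev's lower bound.) -/
open Matrix Kronecker
open scoped ComplexOrder

/-- `(⊗_i W i) ⊗ I_m` : the operator on the joint space of `k` parties (party
`i` having space `ℂ^{d i}`) and an `m`-dimensional message space, acting as
`W i` on party `i` and as identity on the message space. -/
noncomputable def Tfam {k : ℕ} {d : Fin k → ℕ} (m : ℕ)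
    (W : ∀ i, Matrix (Fin (d i)) (Fin (d i)) ℂ) :
    Matrix (((i : Fin k) → Fin (d i)) × Fin m) (((i : Fin k) → Fin (d i)) × Fin m) ℂ :=
  fun p q => if p.2 = q.2 then ∏ i, W i (p.1 i) (q.1 i) else 0

/-- The extension of a matrix `V` acting on party `t`'s space and the message
space to the joint space, acting as identity on all other parties. -/
noncomputable def extParty {k : ℕ} {d : Fin k → ℕ} {m : ℕ} (t : Fin k)
    (V : Matrix (Fin (d t) × Fin m) (Fin (d t) × Fin m) ℂ) :
    Matrix (((i : Fin k) → Fin (d i)) × Fin m) (((i : Fin k) → Fin (d i)) × Fin m) ℂ :=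
  fun p q => if ∀ i, i ≠ t → p.1 i = q.1 i then V (p.1 t, p.2) (q.1 t, q.2) else 0



lemma kron_psd {n p : Type*} [Fintype n] [Fintype p] {A : Matrix n n ℂ} {B : Matrix p p ℂ}
    (hA : A.PosSemidef) (hB : B.PosSemidef) : (A ⊗ₖ B).PosSemidef := by
  classical
  exact hA.kronecker hB

lemma had_psd {n : Type*} [Fintype n] {A B : Matrix n n ℂ}
    (hA : A.PosSemidef) (hB : B.PosSemidef) :
    (Matrix.of fun i j => A i j * B i j : Matrix n n ℂ).PosSemidef := by
  have h := (kron_psd hA hB).submatrix (fun i : n => (i, i))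
  convert h using 2
  ext i j; rfl

lemma prod_psd {n ι : Type*} [Fintype n] [Fintype ι] (f : ι → Matrix n n ℂ)
    (hf : ∀ a, (f a).PosSemidef) :
    (Matrix.of fun i j => ∏ a, f a i j : Matrix n n ℂ).PosSemidef := by
  classical
  have H : ∀ s : Finset ι, (Matrix.of fun i j => ∏ a ∈ s, f a i j : Matrix n n ℂ).PosSemidef := by
    intro s
    induction s using Finset.induction with
    | empty =>
        simp only [Finset.prod_empty]
        refine PosSemidef.of_dotProduct_mulVec_nonneg ?_ ?_
        · ext i j; simp [conjTranspose_apply]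
        · intro x
          have h1 : star x ⬝ᵥ (Matrix.of fun _ _ => (1:ℂ)) *ᵥ x
              = star (∑ i, x i) * (∑ i, x i) := by
            simp only [dotProduct, mulVec, Matrix.of_apply, one_mul, star_sum,
              Finset.sum_mul, Finset.mul_sum, Pi.star_apply]
            rw [Finset.sum_comm]
          rw [h1]
          exact star_mul_self_nonneg _
    | @insert a s ha ih =>
        have h2 := had_psd (hf a) ih
        convert h2 using 2
        ext i j
        simp [Finset.prod_insert ha]
  exact H Finset.univ

lemma quad_reindex {α β : Type*} [Fintype α] [Fintype β] (N : Matrix β β ℂ) (e : α ≃ β)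
    (x : α → ℂ) :
    star x ⬝ᵥ (N.submatrix e e *ᵥ x) = star (x ∘ e.symm) ⬝ᵥ (N *ᵥ (x ∘ e.symm)) := by
  rw [submatrix_mulVec_equiv, dotProduct, dotProduct]
  exact Fintype.sum_equiv e _ _ (fun a => by simp)

lemma conj_quad {α : Type*} [Fintype α] (M N : Matrix α α ℂ) (u : α → ℂ) :
    star (M *ᵥ u) ⬝ᵥ (N *ᵥ (M *ᵥ u)) = star u ⬝ᵥ ((Mᴴ * N * M) *ᵥ u) := by
  simp [star_mulVec, mulVec_mulVec, dotProduct_mulVec, vecMul_vecMul, Matrix.mul_assoc]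

lemma kron_sub {α β : Type*} (A : Matrix α α ℂ) (X Y : Matrix β β ℂ) :
    A ⊗ₖ (X - Y) = A ⊗ₖ X - A ⊗ₖ Y := by
  ext ⟨a,b⟩ ⟨c,e⟩
  simp [mul_sub]


section split

variable {k : ℕ} (d : Fin k → ℕ) (m : ℕ) (t : Fin k)

/-- the joint index split into environment and (party t, message) parts -/
def splitEquiv :
    ((∀ i, Fin (d i)) × Fin m) ≃
      ((∀ j : {j : Fin k // j ≠ t}, Fin (d j.1)) × (Fin (d t) × Fin m)) :=
  (Equiv.prodCongr ((Equiv.piSplitAt t fun i => Fin (d i)).trans (Equiv.prodComm _ _))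
    (Equiv.refl (Fin m))).trans (Equiv.prodAssoc _ _ _)

@[simp] lemma splitEquiv_apply (a : ∀ i, Fin (d i)) (μ : Fin m) :
    splitEquiv d m t (a, μ) = ((fun j : {j : Fin k // j ≠ t} => a j.1), (a t, μ)) := rfl

noncomputable def envMat (W : ∀ i, Matrix (Fin (d i)) (Fin (d i)) ℂ) :
    Matrix (∀ j : {j : Fin k // j ≠ t}, Fin (d j.1)) (∀ j : {j : Fin k // j ≠ t}, Fin (d j.1)) ℂ :=
  Matrix.of fun e e' => ∏ j, W j.1 (e j) (e' j)

lemma Tfam_eq (W : ∀ i, Matrix (Fin (d i)) (Fin (d i)) ℂ) :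
    Tfam m W = ((envMat d t W) ⊗ₖ (W t ⊗ₖ (1 : Matrix (Fin m) (Fin m) ℂ))).submatrix
      (splitEquiv d m t) (splitEquiv d m t) := by
  ext ⟨a,μ⟩ ⟨a',μ'⟩
  simp only [Tfam, submatrix_apply, splitEquiv_apply, kroneckerMap_apply, envMat,
    Matrix.of_apply, Matrix.one_apply]
  by_cases h : μ = μ'
  · subst h
    rw [if_pos rfl, if_pos rfl, mul_one, Fintype.prod_eq_prod_compl_mul t]
    congr 1
    exact Finset.prod_subtype _ (fun x => by simp) _
  · rw [if_neg h, if_neg h, mul_zero, mul_zero]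

lemma extParty_eq (V : Matrix (Fin (d t) × Fin m) (Fin (d t) × Fin m) ℂ) :
    extParty t V = (((1 : Matrix (∀ j : {j : Fin k // j ≠ t}, Fin (d j.1))
        (∀ j : {j : Fin k // j ≠ t}, Fin (d j.1)) ℂ)) ⊗ₖ V).submatrix
      (splitEquiv d m t) (splitEquiv d m t) := by
  classical
  ext ⟨a,μ⟩ ⟨a',μ'⟩
  simp only [extParty, submatrix_apply, splitEquiv_apply, kroneckerMap_apply, Matrix.one_apply]
  by_cases h : ∀ i, i ≠ t → a i = a' i
  · rw [if_pos h, if_pos (funext fun j => h j.1 j.2), one_mul]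
  · rw [if_neg h, if_neg, zero_mul]
    intro hc
    exact h (fun i hi => congrFun hc ⟨i, hi⟩)

end split


/-- Monotonicity step `F_j ≥ F_{j+1}` in the multiparty extension of Kitaev's
lower bound: if `V†·(Z' ⊗ I_m)·V ⪯ (Z t) ⊗ I_m` for the party `t` moving in the
current round, then the certificate value cannot increase along the round. -/
theorem stmt_11 (k : ℕ) (hk : 1 ≤ k) (d : Fin k → ℕ) (hd : ∀ i, 1 ≤ d i)
    (m : ℕ) (hm : 1 ≤ m) (t : Fin k)
    (V : Matrix (Fin (d t) × Fin m) (Fin (d t) × Fin m) ℂ)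
    (hV : V ∈ Matrix.unitaryGroup (Fin (d t) × Fin m) ℂ)
    (Z : ∀ i, Matrix (Fin (d i)) (Fin (d i)) ℂ) (hZ : ∀ i, (Z i).PosSemidef)
    (Z' : Matrix (Fin (d t)) (Fin (d t)) ℂ) (hZ' : Z'.PosSemidef)
    (hstep : (Z t ⊗ₖ (1 : Matrix (Fin m) (Fin m) ℂ) -
      Vᴴ * (Z' ⊗ₖ (1 : Matrix (Fin m) (Fin m) ℂ)) * V).PosSemidef)
    (ψ : ((i : Fin k) → Fin (d i)) × Fin m → ℂ) :
    (star ψ ⬝ᵥ (Tfam m Z).mulVec ψ).re ≥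
    (star ((extParty t V).mulVec ψ) ⬝ᵥ
      (Tfam m (Function.update Z t Z')).mulVec ((extParty t V).mulVec ψ)).re := by
  classical
  set r := splitEquiv d m t with hr
  set A := envMat d t Z with hAdef
  set Φ := ψ ∘ r.symm with hΦ
  have hA : A.PosSemidef := by
    have := prod_psd (fun j : {j : Fin k // j ≠ t} =>
      (Z j.1).submatrix (fun e : ∀ j : {j : Fin k // j ≠ t}, Fin (d j.1) => e j)
        (fun e => e j)) (fun j => (hZ j.1).submatrix _)
    exact this
  have key1 : star ψ ⬝ᵥ (Tfam m Z) *ᵥ ψ = star Φ ⬝ᵥ ((A ⊗ₖ (Z t ⊗ₖ 1)) *ᵥ Φ) := by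
    rw [Tfam_eq, quad_reindex]
  have hφ : ((extParty t V) *ᵥ ψ) ∘ r.symm =
      ((1 : Matrix _ _ ℂ) ⊗ₖ V) *ᵥ Φ := by
    rw [extParty_eq d m t V, submatrix_mulVec_equiv]
    funext x
    simp [hΦ, hr, Function.comp]
  have key2 : star ((extParty t V) *ᵥ ψ) ⬝ᵥ (Tfam m (Function.update Z t Z')) *ᵥ
      ((extParty t V) *ᵥ ψ) = star Φ ⬝ᵥ ((A ⊗ₖ (Vᴴ * (Z' ⊗ₖ 1) * V)) *ᵥ Φ) := by
    rw [Tfam_eq, quad_reindex, hφ]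
    have henv : envMat d t (Function.update Z t Z') = A := by
      ext e e'
      simp only [hAdef, envMat, Matrix.of_apply]
      exact Finset.prod_congr rfl fun j _ => by rw [Function.update_of_ne j.2]
    rw [henv, Function.update_self, conj_quad]
    congr 2
    have h1 : (((1 : Matrix (∀ j : {j : Fin k // j ≠ t}, Fin (d j.1))
        (∀ j : {j : Fin k // j ≠ t}, Fin (d j.1)) ℂ) ⊗ₖ V))ᴴ =
        (1 : Matrix (∀ j : {j : Fin k // j ≠ t}, Fin (d j.1))
        (∀ j : {j : Fin k // j ≠ t}, Fin (d j.1)) ℂ) ⊗ₖ Vᴴ := by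
      ext ⟨a,b⟩ ⟨c,e⟩
      by_cases hac : a = c
      · subst hac
        simp [conjTranspose_apply, Matrix.one_apply]
      · simp [conjTranspose_apply, Matrix.one_apply, hac, Ne.symm hac]
    rw [h1, ← mul_kronecker_mul, ← mul_kronecker_mul, one_mul, mul_one]
  have hdiff : star ψ ⬝ᵥ (Tfam m Z) *ᵥ ψ - star ((extParty t V) *ᵥ ψ) ⬝ᵥ
      (Tfam m (Function.update Z t Z')) *ᵥ ((extParty t V) *ᵥ ψ)
      = star Φ ⬝ᵥ ((A ⊗ₖ (Z t ⊗ₖ (1 : Matrix (Fin m) (Fin m) ℂ) -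
          Vᴴ * (Z' ⊗ₖ (1 : Matrix (Fin m) (Fin m) ℂ)) * V)) *ᵥ Φ) := by
    rw [key1, key2, kron_sub, sub_mulVec, dotProduct_sub]
  have hpsd := (kron_psd hA hstep).dotProduct_mulVec_nonneg Φ
  rw [← hdiff] at hpsd
  rw [Complex.le_def] at hpsd
  have h0 := hpsd.1
  simp only [Complex.zero_re, Complex.sub_re] at h0
  linarith
end
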